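/- Let θ be a real number with 0 ≤ θ < 1, let ν ≥ 1 be a natural number, and let λ : ℕ → ℝ be a sequence with λ_t ≥ 0 for all t and λ_t → 0 as t → ∞. Then the sequence t ↦ ∑_{r=0}^{t} λ_r · θ^{⌈(t−r)/ν⌉} converges to 0 as t → ∞. -/

import Mathlib

open Filter Finset

private lemma geom_partial_le (ρ : ℝ) (h0 : 0 ≤ ρ) (h1 : ρ < 1) (n : ℕ) :
    ∑ j ∈ Finset.range n, ρ ^ j ≤ (1 - ρ)⁻¹ := by
  have hs : Summable (fun j : ℕ => ρ ^ j) := summable_geometric_of_lt_one h0 h1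
  calc ∑ j ∈ Finset.range n, ρ ^ j ≤ ∑' j : ℕ, ρ ^ j :=
        Summable.sum_le_tsum _ (fun i _ => pow_nonneg h0 i) hs
    _ = (1 - ρ)⁻¹ := tsum_geometric_of_lt_one h0 h1

private lemma conv_null (ρ : ℝ) (h0 : 0 ≤ ρ) (h1 : ρ < 1)
    (f : ℕ → ℝ) (hf : ∀ n, 0 ≤ f n) (hlim : Tendsto f atTop (nhds 0)) :
    Tendsto (fun t : ℕ => ∑ r ∈ Finset.range (t + 1), f r * ρ ^ (t - r))
      atTop (nhds 0) := by
  have h1ρ : 0 < 1 - ρ := by linarith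
  rw [Metric.tendsto_atTop]
  intro ε hε
  set ε₁ : ℝ := ε * (1 - ρ) / 2 with hε₁def
  have hε₁ : 0 < ε₁ := by positivity
  -- choose N₁ with f r < ε₁ for r ≥ N₁
  obtain ⟨N₁, hN₁⟩ := (Metric.tendsto_atTop.1 hlim) ε₁ hε₁
  have hfsmall : ∀ r ≥ N₁, f r ≤ ε₁ := by
    intro r hr
    have := hN₁ r hr
    rw [Real.dist_eq, sub_zero, abs_of_nonneg (hf r)] at this
    linarith
  -- the head tends to 0
  have hhead : Tendsto (fun t : ℕ => ∑ r ∈ Finset.range N₁, f r * ρ ^ (t - r))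
      atTop (nhds 0) := by
    have : Tendsto (fun t : ℕ => ∑ r ∈ Finset.range N₁, f r * ρ ^ (t - r))
        atTop (nhds (∑ r ∈ Finset.range N₁, (0:ℝ))) := by
      apply tendsto_finset_sum
      intro r _
      have h2 : Tendsto (fun t : ℕ => ρ ^ (t - r)) atTop (nhds 0) :=
        (tendsto_pow_atTop_nhds_zero_of_lt_one h0 h1).comp
          (tendsto_sub_atTop_nat r)
      simpa using h2.const_mul (f r)
    simpa using this
  obtain ⟨N₂, hN₂⟩ := (Metric.tendsto_atTop.1 hhead) (ε / 2) (by positivity)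
  refine ⟨max N₁ N₂, fun t ht => ?_⟩
  have htN₁ : N₁ ≤ t := le_trans (le_max_left _ _) ht
  have htN₂ : N₂ ≤ t := le_trans (le_max_right _ _) ht
  have hheadlt : ∑ r ∈ Finset.range N₁, f r * ρ ^ (t - r) < ε / 2 := by
    have := hN₂ t htN₂
    rw [Real.dist_eq, sub_zero] at this
    calc ∑ r ∈ Finset.range N₁, f r * ρ ^ (t - r)
        ≤ |∑ r ∈ Finset.range N₁, f r * ρ ^ (t - r)| := le_abs_self _
      _ < ε / 2 := this
  -- split the sum
  have hsplit : ∑ r ∈ Finset.range (t + 1), f r * ρ ^ (t - r)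
      = ∑ r ∈ Finset.range N₁, f r * ρ ^ (t - r)
        + ∑ r ∈ Finset.Ico N₁ (t + 1), f r * ρ ^ (t - r) := by
    rw [Finset.range_eq_Ico, Finset.range_eq_Ico]
    exact (Finset.sum_Ico_consecutive (fun r => f r * ρ ^ (t - r)) (Nat.zero_le N₁) (by omega : N₁ ≤ t + 1)).symm
  have htail : ∑ r ∈ Finset.Ico N₁ (t + 1), f r * ρ ^ (t - r) ≤ ε / 2 := by
    have e1 : ∑ r ∈ Finset.Ico N₁ (t + 1), f r * ρ ^ (t - r)
        ≤ ∑ r ∈ Finset.Ico N₁ (t + 1), ε₁ * ρ ^ (t - r) := by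
      apply Finset.sum_le_sum
      intro r hr
      exact mul_le_mul_of_nonneg_right (hfsmall r (Finset.mem_Ico.1 hr).1)
        (pow_nonneg h0 _)
    have e2 : ∑ r ∈ Finset.Ico N₁ (t + 1), ε₁ * ρ ^ (t - r)
        ≤ ∑ r ∈ Finset.range (t + 1), ε₁ * ρ ^ (t - r) := by
      apply Finset.sum_le_sum_of_subset_of_nonneg
      · rw [Finset.range_eq_Ico]
        exact Finset.Ico_subset_Ico (Nat.zero_le _) le_rfl
      · intro i _ _
        positivity
    have e3 : ∑ r ∈ Finset.range (t + 1), ε₁ * ρ ^ (t - r)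
        = ε₁ * ∑ r ∈ Finset.range (t + 1), ρ ^ (t - r) := by
      rw [Finset.mul_sum]
    have e4 : ∑ r ∈ Finset.range (t + 1), ρ ^ (t - r)
        = ∑ j ∈ Finset.range (t + 1), ρ ^ j := by
      have := Finset.sum_range_reflect (fun j => ρ ^ j) (t + 1)
      simpa using this
    have e5 : ε₁ * ∑ j ∈ Finset.range (t + 1), ρ ^ j ≤ ε₁ * (1 - ρ)⁻¹ :=
      mul_le_mul_of_nonneg_left (geom_partial_le ρ h0 h1 _) hε₁.le
    have e6 : ε₁ * (1 - ρ)⁻¹ = ε / 2 := by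
      rw [hε₁def]
      field_simp
    calc ∑ r ∈ Finset.Ico N₁ (t + 1), f r * ρ ^ (t - r)
        ≤ ∑ r ∈ Finset.Ico N₁ (t + 1), ε₁ * ρ ^ (t - r) := e1
      _ ≤ ∑ r ∈ Finset.range (t + 1), ε₁ * ρ ^ (t - r) := e2
      _ = ε₁ * ∑ r ∈ Finset.range (t + 1), ρ ^ (t - r) := e3
      _ = ε₁ * ∑ j ∈ Finset.range (t + 1), ρ ^ j := by rw [e4]
      _ ≤ ε₁ * (1 - ρ)⁻¹ := e5
      _ = ε / 2 := e6
  have hSnn : 0 ≤ ∑ r ∈ Finset.range (t + 1), f r * ρ ^ (t - r) :=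
    Finset.sum_nonneg fun r _ => mul_nonneg (hf r) (pow_nonneg h0 _)
  rw [Real.dist_eq, sub_zero, abs_of_nonneg hSnn, hsplit]
  linarith

/-- If `0 ≤ θ < 1`, `ν ≥ 1`, and `λ_t ≥ 0` with `λ_t → 0`, then the weighted
sums `∑_{r=0}^{t} λ_r·θ^{⌈(t−r)/ν⌉}` tend to `0` as `t → ∞`. -/
theorem tendsto_sum_stepsize_geometric
    (θ : ℝ) (hθ0 : 0 ≤ θ) (hθ1 : θ < 1) (ν : ℕ) (hν : 1 ≤ ν)
    (lam : ℕ → ℝ) (hnn : ∀ t : ℕ, 0 ≤ lam t)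
    (hlim : Filter.Tendsto lam Filter.atTop (nhds 0)) :
    Filter.Tendsto
      (fun t : ℕ => ∑ r ∈ Finset.range (t + 1),
        lam r * θ ^ ⌈((t : ℚ) - (r : ℚ)) / (ν : ℚ)⌉)
      Filter.atTop (nhds 0) := by
  set ρ : ℝ := θ ^ ((ν : ℝ)⁻¹) with hρdef
  have hνR : (0:ℝ) < (ν : ℝ) := by exact_mod_cast Nat.lt_of_lt_of_le Nat.zero_lt_one hν
  have hρ0 : 0 ≤ ρ := Real.rpow_nonneg hθ0 _
  have hρ1 : ρ < 1 := Real.rpow_lt_one hθ0 hθ1 (by positivity)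
  have hρν : ρ ^ ν = θ := by
    rw [hρdef, ← Real.rpow_natCast (θ ^ ((ν : ℝ)⁻¹)) ν, ← Real.rpow_mul hθ0,
      inv_mul_cancel₀ hνR.ne', Real.rpow_one]
  have key : ∀ k : ℕ, θ ^ ⌈(k : ℚ) / (ν : ℚ)⌉ ≤ ρ ^ k := by
    intro k
    set m : ℤ := ⌈(k : ℚ) / (ν : ℚ)⌉ with hmdef
    have hm0 : 0 ≤ m := Int.ceil_nonneg (by positivity)
    have hνQ : (0:ℚ) < (ν : ℚ) := by exact_mod_cast Nat.lt_of_lt_of_le Nat.zero_lt_one hν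
    have hkm : (k : ℤ) ≤ (ν : ℤ) * m := by
      have h := Int.le_ceil ((k : ℚ) / (ν : ℚ))
      rw [div_le_iff₀ hνQ] at h
      have : (k : ℚ) ≤ ((ν : ℤ) * m : ℤ) := by push_cast; linarith
      exact_mod_cast this
    lift m to ℕ using hm0 with n hn
    have hkn : k ≤ ν * n := by exact_mod_cast hkm
    calc θ ^ (n : ℤ) = θ ^ n := zpow_natCast θ n
      _ = (ρ ^ ν) ^ n := by rw [hρν]
      _ = ρ ^ (ν * n) := (pow_mul ρ ν n).symm
      _ ≤ ρ ^ k := pow_le_pow_of_le_one hρ0 hρ1.le hkn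
  apply squeeze_zero
    (g := fun t : ℕ => ∑ r ∈ Finset.range (t + 1), lam r * ρ ^ (t - r))
  · intro t
    apply Finset.sum_nonneg
    intro r _
    exact mul_nonneg (hnn r) (zpow_nonneg hθ0 _)
  · intro t
    apply Finset.sum_le_sum
    intro r hr
    have hrt : r ≤ t := Nat.lt_succ_iff.1 (Finset.mem_range.1 hr)
    have hcast : (t : ℚ) - (r : ℚ) = ((t - r : ℕ) : ℚ) := by
      push_cast [Nat.cast_sub hrt]; ring
    rw [hcast]
    exact mul_le_mul_of_nonneg_left (key (t - r)) (hnn r)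
  · exact conv_null ρ hρ0 hρ1 lam hnn hlim
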